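/- Saito's criterion in two variables: if θ_1, θ_2 ∈ Der(-log f) for a reduced f ∈ C[x,y] and the determinant of their coefficient matrix equals c·f for a nonzero constant c, then θ_1, θ_2 form a free basis of Der(-log f). -/

import Mathlib

open MvPolynomial

set_option maxHeartbeats 1000000
set_option synthInstance.maxHeartbeats 400000

noncomputable section

abbrev P (n : ℕ) : Type := MvPolynomial (Fin n) ℂ

/-- The module `Der(-log f)` of logarithmic derivations along `f`, recorded as
coefficient tuples `c` with `Σ cᵢ ∂ᵢ f ∈ (f)`. -/
def DerLog (n : ℕ) (f : P n) : Submodule (P n) (Fin n → P n) where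
  carrier := {c | (∑ i, c i * pderiv i f) ∈ Ideal.span {f}}
  zero_mem' := by simp
  add_mem' := by
    intro c d hc hd
    have h : (∑ i, (c + d) i * pderiv i f) =
        (∑ i, c i * pderiv i f) + (∑ i, d i * pderiv i f) := by
      simp [add_mul, Finset.sum_add_distrib]
    simp only [Set.mem_setOf_eq] at hc hd ⊢
    rw [h]; exact add_mem hc hd
  smul_mem' := by
    intro a c hc
    have h : (∑ i, (a • c) i * pderiv i f) = a * ∑ i, c i * pderiv i f := by
      simp [Finset.mul_sum, mul_assoc]
    simp only [Set.mem_setOf_eq] at hc ⊢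
    rw [h]; exact Ideal.mul_mem_left _ a hc


/-- Under `finSuccEquiv`, `pderiv 0` becomes `Polynomial.derivative`. -/
lemma deriv_finSuccEquiv {n : ℕ} (p : MvPolynomial (Fin (n + 1)) ℂ) :
    Polynomial.derivative (finSuccEquiv ℂ n p) = finSuccEquiv ℂ n (pderiv 0 p) := by
  induction p using MvPolynomial.induction_on with
  | C a => simp [finSuccEquiv_apply]
  | add p q hp hq => simp [map_add, hp, hq]
  | mul_X p i hp =>
    have hX : Polynomial.derivative (finSuccEquiv ℂ n (X i))
        = finSuccEquiv ℂ n (pderiv 0 (X i)) := by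
      cases i using Fin.cases with
      | zero => simp [finSuccEquiv_X_zero, pderiv_X_self, finSuccEquiv_apply]
      | succ j =>
          simp [finSuccEquiv_X_succ, pderiv_X_of_ne (Fin.succ_ne_zero j), finSuccEquiv_apply]
    rw [map_mul, Polynomial.derivative_mul, hp, pderiv_mul, map_add, map_mul, map_mul, hX]

lemma pderiv_zero_of_self_dvd {q : P 2} (h : q ∣ pderiv 0 q) : pderiv 0 q = 0 := by
  by_contra hne
  set φ := finSuccEquiv ℂ 1 with hφ
  have hd : Polynomial.derivative (φ q) = φ (pderiv 0 q) := deriv_finSuccEquiv q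
  have hDne : φ (pderiv 0 q) ≠ 0 :=
    fun h0 => hne (φ.injective (h0.trans (map_zero (φ : P 2 →+* Polynomial (MvPolynomial (Fin 1) ℂ))).symm))
  have hdvd : φ q ∣ Polynomial.derivative (φ q) := by
    rw [hd]; exact map_dvd (φ : P 2 →+* Polynomial (MvPolynomial (Fin 1) ℂ)) h
  have hQd : (φ q).natDegree ≠ 0 := by
    intro h0
    have hz : Polynomial.derivative (φ q) = 0 := by
      rw [Polynomial.eq_C_of_natDegree_eq_zero h0, Polynomial.derivative_C]
    rw [hd] at hz; exact hDne hz
  have h1 := Polynomial.natDegree_le_of_dvd hdvd (hd ▸ hDne)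
  have h2 := Polynomial.natDegree_derivative_lt hQd
  omega

lemma pderiv_one_of_self_dvd {q : P 2} (h : q ∣ pderiv 1 q) : pderiv 1 q = 0 := by
  have hswap : Function.Injective (Equiv.swap (0 : Fin 2) 1) := (Equiv.swap 0 1).injective
  have key : pderiv ((Equiv.swap (0 : Fin 2) 1) 1) (rename (Equiv.swap (0 : Fin 2) 1) q)
      = rename (Equiv.swap (0 : Fin 2) 1) (pderiv 1 q) := pderiv_rename hswap 1 q
  rw [Equiv.swap_apply_right] at key
  have h2 : rename (Equiv.swap (0 : Fin 2) 1) q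
      ∣ pderiv 0 (rename (Equiv.swap (0 : Fin 2) 1) q) := by
    rw [key]; exact map_dvd (rename (Equiv.swap (0 : Fin 2) 1)) h
  have h3 := pderiv_zero_of_self_dvd h2
  rw [key] at h3
  exact rename_injective _ hswap (h3.trans (map_zero (rename (Equiv.swap (0 : Fin 2) 1))).symm)

lemma finSuccEquiv_rename_succ {n : ℕ} (r : MvPolynomial (Fin n) ℂ) :
    finSuccEquiv ℂ n (rename Fin.succ r) = Polynomial.C r := by
  induction r using MvPolynomial.induction_on with
  | C a => simp [finSuccEquiv_apply]
  | add p q hp hq => simp [map_add, hp, hq]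
  | mul_X p i hp => simp [map_mul, rename_X, finSuccEquiv_X_succ, hp]

lemma eq_C_of_pderiv_eq_zero {q : P 2} (h0 : pderiv 0 q = 0) (h1 : pderiv 1 q = 0) :
    ∃ a : ℂ, q = C a := by
  have hd : Polynomial.derivative (finSuccEquiv ℂ 1 q) = 0 := by
    rw [deriv_finSuccEquiv, h0, map_zero]
  have hQ := Polynomial.eq_C_of_derivative_eq_zero hd
  set r : MvPolynomial (Fin 1) ℂ := (finSuccEquiv ℂ 1 q).coeff 0 with hr
  have hqr : q = rename Fin.succ r :=
    (finSuccEquiv ℂ 1).injective (by rw [finSuccEquiv_rename_succ, hQ])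
  have hpr : pderiv 0 r = 0 := by
    have hk : pderiv ((0 : Fin 1).succ) (rename Fin.succ r)
        = rename Fin.succ (pderiv 0 r) := pderiv_rename (Fin.succ_injective 1) 0 r
    have hone : ((0 : Fin 1).succ : Fin 2) = 1 := rfl
    rw [hone] at hk
    rw [hqr, hk] at h1
    exact rename_injective _ (Fin.succ_injective 1)
      (h1.trans (map_zero (rename (Fin.succ : Fin 1 → Fin 2))).symm)
  have hd0 : Polynomial.derivative (finSuccEquiv ℂ 0 r) = 0 := by
    rw [deriv_finSuccEquiv, hpr, map_zero]
  have hR := Polynomial.eq_C_of_derivative_eq_zero hd0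
  set s : MvPolynomial (Fin 0) ℂ := (finSuccEquiv ℂ 0 r).coeff 0 with hs
  have hsC : s = C (constantCoeff s) := eq_C_of_isEmpty s
  refine ⟨constantCoeff s, ?_⟩
  have hrC : r = C (constantCoeff s) := by
    apply (finSuccEquiv ℂ 0).injective
    rw [hR, hsC]
    simp [finSuccEquiv_apply]
  rw [hqr, hrC, rename_C]

lemma prime_partials {p f : P 2} (hp : Prime p) (hf : Squarefree f) (hpf : p ∣ f)
    (hx : p ∣ pderiv 0 f) (hy : p ∣ pderiv 1 f) : False := by
  obtain ⟨u, rfl⟩ := hpf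
  have hpu : ¬p ∣ u := fun hd => hp.not_unit (hf p (mul_dvd_mul_left p hd))
  rw [pderiv_mul] at hx hy
  have hx' : p ∣ pderiv 0 p * u := by
    simpa using dvd_sub hx (dvd_mul_right p (pderiv 0 u))
  have hy' : p ∣ pderiv 1 p * u := by
    simpa using dvd_sub hy (dvd_mul_right p (pderiv 1 u))
  have hpp0 : p ∣ pderiv 0 p := (hp.dvd_or_dvd hx').resolve_right hpu
  have hpp1 : p ∣ pderiv 1 p := (hp.dvd_or_dvd hy').resolve_right hpu
  obtain ⟨a, rfl⟩ := eq_C_of_pderiv_eq_zero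
    (pderiv_zero_of_self_dvd hpp0) (pderiv_one_of_self_dvd hpp1)
  rcases eq_or_ne a 0 with rfl | ha
  · exact hp.ne_zero (by simp)
  · exact hp.not_unit ((isUnit_iff_ne_zero.mpr ha).map (C : ℂ →+* P 2))

lemma sqf_dvd {f D : P 2} (hf : Squarefree f)
    (h : ∀ p : P 2, Prime p → p ∣ f → p ∣ D) : f ∣ D := by
  refine UniqueFactorizationMonoid.induction_on_prime
    (P := fun x : P 2 => Squarefree x → (∀ p : P 2, Prime p → p ∣ x → p ∣ D) → x ∣ D)
    f ?_ ?_ ?_ hf h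
  · intro hsq _; exact absurd hsq not_squarefree_zero
  · intro x hx _ _; exact hx.dvd
  · intro a p ha hp IH hsq hdvd
    have hpa : ¬p ∣ a := fun hd => hp.not_unit (hsq p (mul_dvd_mul_left p hd))
    have haD : a ∣ D := IH (hsq.squarefree_of_dvd (dvd_mul_left a p))
      (fun q hq hqa => hdvd q hq (hqa.trans (dvd_mul_left a p)))
    have hpD : p ∣ D := hdvd p hp (dvd_mul_right p a)
    obtain ⟨e, rfl⟩ := haD
    obtain ⟨e', rfl⟩ := (hp.dvd_or_dvd hpD).resolve_left hpa
    exact ⟨e', by ring⟩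

lemma saito_dvd (f : P 2) (hf : Squarefree f) (t₀ t₁ a₀ a₁ : P 2)
    (ht : f ∣ t₀ * pderiv 0 f + t₁ * pderiv 1 f)
    (ha : f ∣ a₀ * pderiv 0 f + a₁ * pderiv 1 f) :
    f ∣ a₀ * t₁ - a₁ * t₀ := by
  obtain ⟨h, hh⟩ := ht
  obtain ⟨g, hg⟩ := ha
  refine sqf_dvd hf fun p hp hpf => ?_
  by_contra hpD
  have h1 : p ∣ (a₀ * t₁ - a₁ * t₀) * pderiv 0 f :=
    hpf.trans ⟨t₁ * g - a₁ * h, by linear_combination t₁ * hg - a₁ * hh⟩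
  have h2 : p ∣ (a₀ * t₁ - a₁ * t₀) * pderiv 1 f :=
    hpf.trans ⟨a₀ * h - t₀ * g, by linear_combination a₀ * hh - t₀ * hg⟩
  exact prime_partials hp hf hpf ((hp.dvd_or_dvd h1).resolve_left hpD)
    ((hp.dvd_or_dvd h2).resolve_left hpD)

/-- **Saito's criterion in two variables.** If `θ₁, θ₂` are
logarithmic along a reduced `f` and the determinant of their coefficient matrix
is a nonzero constant multiple of `f`, then they form a free basis of
`Der(-log f)`. -/
theorem saito_criterion_two_vars (f : P 2) (hred : Squarefree f)
    (θ₁ θ₂ : Fin 2 → P 2)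
    (h₁ : θ₁ ∈ DerLog 2 f) (h₂ : θ₂ ∈ DerLog 2 f)
    (c : ℂ) (hc : c ≠ 0)
    (hdet : θ₁ 0 * θ₂ 1 - θ₁ 1 * θ₂ 0 = c • f) :
    ∃ b : Module.Basis (Fin 2) (P 2) (DerLog 2 f),
      ((b 0 : Fin 2 → P 2) = θ₁) ∧ ((b 1 : Fin 2 → P 2) = θ₂) := by
  classical
  have hf0 : f ≠ 0 := hred.ne_zero
  have hdet' : θ₁ 0 * θ₂ 1 - θ₁ 1 * θ₂ 0 = C c * f := by
    rw [hdet, smul_eq_C_mul]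
  have hCc0 : (C c : P 2) ≠ 0 := by simpa using hc
  have hCf : (C c : P 2) * f ≠ 0 := mul_ne_zero hCc0 hf0
  have hd1 : f ∣ θ₁ 0 * pderiv 0 f + θ₁ 1 * pderiv 1 f := by
    have h' : (∑ i, θ₁ i * pderiv i f) ∈ Ideal.span {f} := h₁
    rwa [Fin.sum_univ_two, Ideal.mem_span_singleton] at h'
  have hd2 : f ∣ θ₂ 0 * pderiv 0 f + θ₂ 1 * pderiv 1 f := by
    have h' : (∑ i, θ₂ i * pderiv i f) ∈ Ideal.span {f} := h₂
    rwa [Fin.sum_univ_two, Ideal.mem_span_singleton] at h'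
  set v : Fin 2 → DerLog 2 f := ![⟨θ₁, h₁⟩, ⟨θ₂, h₂⟩] with hv
  have hli : LinearIndependent (P 2) v := by
    rw [Fintype.linearIndependent_iff]
    intro g hg
    have hval : g 0 • θ₁ + g 1 • θ₂ = 0 := by
      have := congrArg Subtype.val hg
      simpa [hv, Fin.sum_univ_two] using this
    have e0 : g 0 * θ₁ 0 + g 1 * θ₂ 0 = 0 := by
      have := congr_fun hval 0; simpa using this
    have e1 : g 0 * θ₁ 1 + g 1 * θ₂ 1 = 0 := by
      have := congr_fun hval 1; simpa using this
    have hg0 : g 0 = 0 := by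
      have hz : g 0 * (C c * f) = 0 := by
        linear_combination θ₂ 1 * e0 - θ₂ 0 * e1 - g 0 * hdet'
      exact (mul_eq_zero.mp hz).resolve_right hCf
    have hg1 : g 1 = 0 := by
      by_contra hg1
      have e0' : g 1 * θ₂ 0 = 0 := by linear_combination e0 - θ₁ 0 * hg0
      have e1' : g 1 * θ₂ 1 = 0 := by linear_combination e1 - θ₁ 1 * hg0
      have h20 : θ₂ 0 = 0 := (mul_eq_zero.mp e0').resolve_left hg1
      have h21 : θ₂ 1 = 0 := (mul_eq_zero.mp e1').resolve_left hg1
      apply hCf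
      rw [← hdet', h20, h21]
      ring
    intro i
    fin_cases i
    · exact hg0
    · exact hg1
  have hsp : ⊤ ≤ Submodule.span (P 2) (Set.range v) := by
    rintro x -
    set η : Fin 2 → P 2 := (x : Fin 2 → P 2) with hη
    have hdη : f ∣ η 0 * pderiv 0 f + η 1 * pderiv 1 f := by
      have h' : (∑ i, η i * pderiv i f) ∈ Ideal.span {f} := x.2
      rwa [Fin.sum_univ_two, Ideal.mem_span_singleton] at h'
    obtain ⟨a', hA⟩ := saito_dvd f hred (θ₂ 0) (θ₂ 1) (η 0) (η 1) hd2 hdη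
    obtain ⟨b', hB⟩ : f ∣ η 1 * θ₁ 0 - η 0 * θ₁ 1 := by
      have := saito_dvd f hred (θ₁ 0) (θ₁ 1) (η 0) (η 1) hd1 hdη
      have h2 := dvd_neg.mpr this
      rwa [neg_sub] at h2
    have hCc : (C c : P 2) * C c⁻¹ = 1 := by
      rw [← C_mul, mul_inv_cancel₀ hc, C_1]
    set pp : P 2 := C c⁻¹ * a' with hpp
    set qq : P 2 := C c⁻¹ * b' with hqq
    have comp0 : pp * θ₁ 0 + qq * θ₂ 0 = η 0 := by
      apply mul_left_cancel₀ hCf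
      rw [hpp, hqq]
      linear_combination (f * a' * θ₁ 0 + f * b' * θ₂ 0) * hCc - θ₁ 0 * hA -
        θ₂ 0 * hB + η 0 * hdet'
    have comp1 : pp * θ₁ 1 + qq * θ₂ 1 = η 1 := by
      apply mul_left_cancel₀ hCf
      rw [hpp, hqq]
      linear_combination (f * a' * θ₁ 1 + f * b' * θ₂ 1) * hCc - θ₁ 1 * hA -
        θ₂ 1 * hB + η 1 * hdet'
    have hxeq : x = pp • v 0 + qq • v 1 := by
      apply Subtype.ext
      have : (x : Fin 2 → P 2) = pp • θ₁ + qq • θ₂ := by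
        funext j
        fin_cases j
        · simpa using comp0.symm
        · simpa using comp1.symm
      simpa [hv] using this
    rw [hxeq]
    exact Submodule.add_mem _
      (Submodule.smul_mem _ _ (Submodule.subset_span ⟨0, rfl⟩))
      (Submodule.smul_mem _ _ (Submodule.subset_span ⟨1, rfl⟩))
  refine ⟨Module.Basis.mk hli hsp, ?_, ?_⟩
  · rw [Module.Basis.mk_apply]; simp [hv]
  · rw [Module.Basis.mk_apply]; simp [hv]
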